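/- arXiv:1311.1885 — 2 statements merged into one kernel-verified Lean document; each statement's English description precedes it below -/
import Mathlib

section
/- Let A ∈ ℝ^(n×n), B ∈ ℝ^(n×m), P ∈ ℝ^(n×n) symmetric positive definite, and ξ > 0. Suppose the block matrix [[AᵀPA − P + ξP, AᵀPB],[BᵀPA, BᵀPB − ξI]] is negative semidefinite. Then for any x ∈ ℝⁿ and u ∈ ℝᵐ with xᵀPx ≤ 1 and ‖u‖ ≤ 1, the successor state x₊ = Ax + Bu satisfies x₊ᵀPx₊ ≤ 1, i.e., the ellipsoid {x : xᵀPx ≤ 1} is invariant for the system x₊ = Ax + Bu under inputs bounded in norm by 1. -/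
open Matrix

lemma quad_expand {n m : ℕ} (A : Matrix (Fin n) (Fin n) ℝ) (B : Matrix (Fin n) (Fin m) ℝ)
    (P : Matrix (Fin n) (Fin n) ℝ) (ξ : ℝ) (x : Fin n → ℝ) (u : Fin m → ℝ) :
    (Sum.elim x u) ⬝ᵥ (Matrix.fromBlocks (Aᵀ * P * A - P + ξ • P) (Aᵀ * P * B)
        (Bᵀ * P * A) (Bᵀ * P * B - ξ • (1 : Matrix (Fin m) (Fin m) ℝ))).mulVec (Sum.elim x u)
    = (A.mulVec x + B.mulVec u) ⬝ᵥ P.mulVec (A.mulVec x + B.mulVec u)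
      - x ⬝ᵥ P.mulVec x + ξ * (x ⬝ᵥ P.mulVec x) - ξ * (u ⬝ᵥ u) := by
  have hA' : ∀ w, x ⬝ᵥ Aᵀ.mulVec w = (A.mulVec x) ⬝ᵥ w := fun w => by
    rw [Matrix.dotProduct_mulVec, Matrix.vecMul_transpose]
  have hB' : ∀ w, u ⬝ᵥ Bᵀ.mulVec w = (B.mulVec u) ⬝ᵥ w := fun w => by
    rw [Matrix.dotProduct_mulVec, Matrix.vecMul_transpose]
  simp only [Matrix.fromBlocks_mulVec, sumElim_dotProduct_sumElim,
    Sum.elim_comp_inl, Sum.elim_comp_inr,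
    Matrix.add_mulVec, Matrix.sub_mulVec, Matrix.smul_mulVec, Matrix.one_mulVec,
    ← Matrix.mulVec_mulVec, Matrix.mulVec_add, dotProduct_add, dotProduct_sub,
    dotProduct_smul, smul_eq_mul, hA', hB', add_dotProduct]
  ring

lemma psd_quad_nonneg {n : ℕ} {P : Matrix (Fin n) (Fin n) ℝ} (hP : P.PosSemidef)
    (x : Fin n → ℝ) : 0 ≤ x ⬝ᵥ P.mulVec x := by
  simpa using hP.dotProduct_mulVec_nonneg x

theorem stmt_0 {n m : ℕ} (A : Matrix (Fin n) (Fin n) ℝ) (B : Matrix (Fin n) (Fin m) ℝ)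
    (P : Matrix (Fin n) (Fin n) ℝ) (hP : P.PosDef) (ξ : ℝ) (hξ : 0 < ξ)
    (hLMI : ∀ z : (Fin n ⊕ Fin m) → ℝ,
      z ⬝ᵥ (Matrix.fromBlocks (Aᵀ * P * A - P + ξ • P) (Aᵀ * P * B)
        (Bᵀ * P * A) (Bᵀ * P * B - ξ • (1 : Matrix (Fin m) (Fin m) ℝ))).mulVec z ≤ 0)
    (x : Fin n → ℝ) (u : Fin m → ℝ)
    (hx : x ⬝ᵥ P.mulVec x ≤ 1) (hu : u ⬝ᵥ u ≤ 1) :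
    (A.mulVec x + B.mulVec u) ⬝ᵥ P.mulVec (A.mulVec x + B.mulVec u) ≤ 1 := by
  rcases le_or_gt ξ 1 with h1 | h1
  · have hq := hLMI (Sum.elim x u)
    rw [quad_expand] at hq
    have hs : 0 ≤ x ⬝ᵥ P.mulVec x := psd_quad_nonneg hP.posSemidef x
    have ht : 0 ≤ u ⬝ᵥ u := Finset.sum_nonneg fun i _ => mul_self_nonneg (u i)
    nlinarith
  · cases n with
    | zero =>
      have : (A.mulVec x + B.mulVec u) ⬝ᵥ P.mulVec (A.mulVec x + B.mulVec u) = 0 := by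
        simp [dotProduct]
      rw [this]; norm_num
    | succ k =>
      exfalso
      have hq := hLMI (Sum.elim (Pi.single 0 1 : Fin (k+1) → ℝ) 0)
      rw [quad_expand] at hq
      set v : Fin (k+1) → ℝ := Pi.single 0 1 with hv
      have hvne : v ≠ 0 := by
        intro h
        have := congrFun h 0
        simp [hv] at this
      have h1p : 0 < v ⬝ᵥ P.mulVec v := by
        have := hP.dotProduct_mulVec_pos hvne
        simpa using this
      have h2 : 0 ≤ (A.mulVec v + B.mulVec 0) ⬝ᵥ P.mulVec (A.mulVec v + B.mulVec 0) :=
        psd_quad_nonneg hP.posSemidef _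
      have h3 : ((0 : Fin m → ℝ)) ⬝ᵥ (0 : Fin m → ℝ) = 0 := by simp
      rw [h3] at hq
      nlinarith
end

section
/- Let A ∈ ℝ^(n×n), B ∈ ℝ^(n×m), C ∈ ℝ^(p×n), D ∈ ℝ^(p×m), γ > 0, and suppose there exists a symmetric positive definite matrix P such that the block matrix [[AᵀPA − P + CᵀC, AᵀPB + CᵀD],[BᵀPA + DᵀC, BᵀPB + DᵀD − γ²I]] ⪯ 0. Then for the system x_{k+1} = Ax_k + Bu_k, y_k = Cx_k + Du_k with x₀ = 0, the ℓ₂ gain from u to y is at most γ: for every N, Σ_{k=0}^{N} ‖y_k‖² ≤ γ² Σ_{k=0}^{N} ‖u_k‖². -/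
open Matrix

lemma dotProduct_transpose_mulVec_helper {a b : Type*} [Fintype a] [Fintype b]
    (M : Matrix a b ℝ) (v : b → ℝ) (w : a → ℝ) :
    v ⬝ᵥ Mᵀ *ᵥ w = (M *ᵥ v) ⬝ᵥ w := by
  rw [dotProduct_mulVec, vecMul_transpose]

theorem stmt_7 {n m p : ℕ} (A : Matrix (Fin n) (Fin n) ℝ) (B : Matrix (Fin n) (Fin m) ℝ)
    (C : Matrix (Fin p) (Fin n) ℝ) (D : Matrix (Fin p) (Fin m) ℝ)
    (γ : ℝ) (hγ : 0 < γ) (P : Matrix (Fin n) (Fin n) ℝ) (hP : P.PosDef)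
    (hLMI : ∀ z : (Fin n ⊕ Fin m) → ℝ,
      z ⬝ᵥ (Matrix.fromBlocks (Aᵀ * P * A - P + Cᵀ * C) (Aᵀ * P * B + Cᵀ * D)
        (Bᵀ * P * A + Dᵀ * C)
        (Bᵀ * P * B + Dᵀ * D - (γ ^ 2) • (1 : Matrix (Fin m) (Fin m) ℝ))).mulVec z ≤ 0)
    (u : ℕ → Fin m → ℝ) (x : ℕ → Fin n → ℝ) (y : ℕ → Fin p → ℝ)
    (hx0 : x 0 = 0)
    (hx : ∀ k, x (k + 1) = A.mulVec (x k) + B.mulVec (u k))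
    (hy : ∀ k, y k = C.mulVec (x k) + D.mulVec (u k)) :
    ∀ N : ℕ, ∑ k ∈ Finset.range (N + 1), y k ⬝ᵥ y k ≤
      γ ^ 2 * ∑ k ∈ Finset.range (N + 1), u k ⬝ᵥ u k := by
  intro N
  have step : ∀ k, y k ⬝ᵥ y k ≤ γ ^ 2 * (u k ⬝ᵥ u k)
      + (x k ⬝ᵥ P *ᵥ x k - x (k + 1) ⬝ᵥ P *ᵥ x (k + 1)) := by
    intro k
    have h := hLMI (Sum.elim (x k) (u k))
    have key : Sum.elim (x k) (u k) ⬝ᵥ (Matrix.fromBlocks (Aᵀ * P * A - P + Cᵀ * C)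
        (Aᵀ * P * B + Cᵀ * D) (Bᵀ * P * A + Dᵀ * C)
        (Bᵀ * P * B + Dᵀ * D - (γ ^ 2) • (1 : Matrix (Fin m) (Fin m) ℝ))).mulVec
          (Sum.elim (x k) (u k))
      = x (k + 1) ⬝ᵥ P *ᵥ x (k + 1) - x k ⬝ᵥ P *ᵥ x k
        + y k ⬝ᵥ y k - γ ^ 2 * (u k ⬝ᵥ u k) := by
      rw [hx k, hy k]
      simp only [fromBlocks_mulVec, Sum.elim_comp_inl, Sum.elim_comp_inr,
        sumElim_dotProduct_sumElim, add_mulVec, sub_mulVec, smul_mulVec, one_mulVec,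
        ← mulVec_mulVec, dotProduct_add, dotProduct_sub, dotProduct_smul, smul_eq_mul,
        dotProduct_transpose_mulVec_helper, mulVec_add, add_dotProduct]
      ring
    rw [key] at h
    linarith
  calc ∑ k ∈ Finset.range (N + 1), y k ⬝ᵥ y k
      ≤ ∑ k ∈ Finset.range (N + 1), (γ ^ 2 * (u k ⬝ᵥ u k)
          + (x k ⬝ᵥ P *ᵥ x k - x (k + 1) ⬝ᵥ P *ᵥ x (k + 1))) :=
        Finset.sum_le_sum fun k _ => step k
    _ = γ ^ 2 * ∑ k ∈ Finset.range (N + 1), u k ⬝ᵥ u k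
          + (x 0 ⬝ᵥ P *ᵥ x 0 - x (N + 1) ⬝ᵥ P *ᵥ x (N + 1)) := by
        rw [Finset.sum_add_distrib, ← Finset.mul_sum,
          Finset.sum_range_sub' (fun k => x k ⬝ᵥ P *ᵥ x k)]
    _ ≤ γ ^ 2 * ∑ k ∈ Finset.range (N + 1), u k ⬝ᵥ u k := by
        have h0 : x 0 ⬝ᵥ P *ᵥ x 0 = 0 := by simp [hx0]
        have h1 : 0 ≤ x (N + 1) ⬝ᵥ P *ᵥ x (N + 1) := by
          have := hP.posSemidef.dotProduct_mulVec_nonneg (x (N + 1))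
          simpa using this
        linarith
end
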